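/- Let R be a commutative ring with a non-zero-divisor π such that R is π-adically complete and separated. If M is a finitely presented R-module with no π-torsion (π·m = 0 implies m = 0), then M is π-adically complete and separated, i.e. the natural map M → lim_n M/π^{n+1}M is an isomorphism. (Unnamed lemma in Section 2.1.) -/

import Mathlib

private lemma mem_pow_smul_top_iff {R : Type*} [CommRing R] (π : R) {M : Type*}
    [AddCommGroup M] [Module R M] (n : ℕ) (x : M) :
    x ∈ ((Ideal.span {π}) ^ n • ⊤ : Submodule R M) ↔ ∃ y, x = π ^ n • y := by
  rw [Ideal.span_singleton_pow, Submodule.ideal_span_singleton_smul]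
  constructor
  · intro h
    simp only [← SetLike.mem_coe, Submodule.coe_pointwise_smul] at h
    obtain ⟨y, -, hy⟩ := Set.mem_smul_set.mp h
    exact ⟨y, hy.symm⟩
  · rintro ⟨y, rfl⟩
    exact Submodule.smul_mem_pointwise_smul y (π ^ n) ⊤ trivial

private lemma smodeq_pow_iff {R : Type*} [CommRing R] (π : R) {M : Type*}
    [AddCommGroup M] [Module R M] (n : ℕ) (x y : M) :
    x ≡ y [SMOD ((Ideal.span {π}) ^ n • ⊤ : Submodule R M)] ↔ ∃ z, x - y = π ^ n • z := by
  rw [SModEq.sub_mem, mem_pow_smul_top_iff]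

private lemma sum_range_sub_sum_range_smul {R : Type*} [CommRing R] (π : R) {F : Type*}
    [AddCommGroup F] [Module R F] (a : ℕ → F) {m n : ℕ} (hmn : m ≤ n) :
    ∑ k ∈ Finset.range n, π ^ k • a k - ∑ k ∈ Finset.range m, π ^ k • a k =
      π ^ m • ∑ k ∈ Finset.range (n - m), π ^ k • a (m + k) := by
  rw [← Finset.sum_Ico_eq_sub _ hmn, Finset.sum_Ico_eq_sum_range, Finset.smul_sum]
  exact Finset.sum_congr rfl fun k _ => by rw [pow_add, mul_smul]

/-- **Unnamed lemma in Section 2.1.** Let `R` be a commutative ring with a non-zero-divisor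
`π` such that `R` is `π`-adically complete and separated.  If `M` is a finitely presented
`R`-module with no `π`-torsion, then `M` is `π`-adically complete and separated, i.e. the
natural map `M → lim_n M/π^(n+1)M` is an isomorphism. -/
theorem finitePresentation_torsionFree_isAdicComplete
    (R : Type*) [CommRing R] (π : R) (hπ : π ∈ nonZeroDivisors R)
    (hR : IsAdicComplete (Ideal.span {π}) R)
    (M : Type*) [AddCommGroup M] [Module R M]
    (hfp : Module.FinitePresentation R M)
    (htf : ∀ m : M, π • m = 0 → m = 0) :
    IsAdicComplete (Ideal.span {π}) M := by
  classical
  -- completeness/separatedness of R in the ∃-form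
  have hausR : ∀ x : R, (∀ n, ∃ y, x = π ^ n * y) → x = 0 := by
    intro x hx
    refine hR.toIsHausdorff.haus x fun n => (smodeq_pow_iff π n x 0).mpr ?_
    obtain ⟨y, hy⟩ := hx n
    exact ⟨y, by rw [sub_zero, hy, smul_eq_mul]⟩
  have precR : ∀ f : ℕ → R, (∀ m n, m ≤ n → ∃ z, f n - f m = π ^ m * z) →
      ∃ L : R, ∀ n, ∃ z, L - f n = π ^ n * z := by
    intro f hf
    have : ∀ {m n}, m ≤ n → f m ≡ f n [SMOD ((Ideal.span {π}) ^ m • ⊤ : Submodule R R)] := by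
      intro m n hmn
      obtain ⟨z, hz⟩ := hf m n hmn
      exact (smodeq_pow_iff π m (f m) (f n)).mpr ⟨-z, by rw [smul_eq_mul, ← neg_sub, hz, mul_neg]⟩
    obtain ⟨L, hL⟩ := hR.toIsPrecomplete.prec this
    refine ⟨L, fun n => ?_⟩
    obtain ⟨z, hz⟩ := (smodeq_pow_iff π n (f n) L).mp (hL n)
    exact ⟨-z, by rw [← neg_sub (f n) L, hz, mul_neg, smul_eq_mul]⟩
  -- presentation
  have : Module.FinitePresentation R M := hfp
  obtain ⟨b, g, hg⟩ := Module.Finite.exists_fin' R M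
  set F := Fin b → R
  have hN : (LinearMap.ker g).FG := Module.FinitePresentation.fg_ker g hg
  obtain ⟨s, hs⟩ := hN
  set N := LinearMap.ker g
  -- completeness/separatedness of F = Fin b → R, coordinatewise
  have hausF : ∀ x : F, (∀ n, ∃ y : F, x = π ^ n • y) → x = 0 := by
    intro x hx
    funext i
    refine hausR (x i) fun n => ?_
    obtain ⟨y, hy⟩ := hx n
    exact ⟨y i, by rw [hy]; rfl⟩
  have precF : ∀ f : ℕ → F, (∀ m n, m ≤ n → ∃ z : F, f n - f m = π ^ m • z) →
      ∃ L : F, ∀ n, ∃ z : F, L - f n = π ^ n • z := by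
    intro f hf
    have key : ∀ i : Fin b, ∃ L : R, ∀ n, ∃ z, L - f n i = π ^ n * z := by
      intro i
      refine precR (fun n => f n i) fun m n hmn => ?_
      obtain ⟨z, hz⟩ := hf m n hmn
      exact ⟨z i, by have := congrFun hz i; exact this⟩
    choose L hL using key
    refine ⟨L, fun n => ?_⟩
    choose z hz using fun i => hL i n
    exact ⟨z, by funext i; exact hz i⟩
  -- saturation of N
  have sat : ∀ x : F, π • x ∈ N → x ∈ N := by
    intro x hx
    have : π • g x = 0 := by rw [← map_smul]; exact hx
    exact htf (g x) this
  have satn : ∀ (n : ℕ) (x : F), π ^ n • x ∈ N → x ∈ N := by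
    intro n
    induction n with
    | zero => intro x hx; simpa using hx
    | succ n ih =>
      intro x hx
      refine ih x (sat _ ?_)
      rwa [smul_smul, ← pow_succ']
  refine { toIsHausdorff := ?_, toIsPrecomplete := ?_ }
  · -- Hausdorff
    constructor
    intro x hx
    have hx' : ∀ n, ∃ u : M, x = π ^ n • u := by
      intro n
      obtain ⟨u, hu⟩ := (smodeq_pow_iff π n x 0).mp (hx n)
      exact ⟨u, by rwa [sub_zero] at hu⟩
    choose u hu using hx'
    obtain ⟨xh, hxh⟩ := hg x
    choose z hz using fun n => hg (u n)
    -- w n := xh - π^n • z n ∈ N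
    have hw : ∀ n, xh - π ^ n • z n ∈ N := by
      intro n
      simp only [N, LinearMap.mem_ker, map_sub, map_smul, hxh, hz, ← hu n, sub_self]
    -- y n := z n - π • z (n+1) ∈ N
    set y : ℕ → F := fun n => z n - π • z (n + 1) with hy_def
    have hyN : ∀ n, y n ∈ N := by
      intro n
      refine satn n _ ?_
      have : π ^ n • y n = (xh - π ^ (n + 1) • z (n + 1)) - (xh - π ^ n • z n) := by
        simp only [hy_def, smul_sub, smul_smul, ← pow_succ]
        abel
      rw [this]
      exact Submodule.sub_mem _ (hw (n + 1)) (hw n)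
    -- telescoping
    have tele : ∀ n, z 0 - ∑ k ∈ Finset.range n, π ^ k • y k = π ^ n • z n := by
      intro n
      induction n with
      | zero => simp
      | succ n ih =>
        rw [Finset.sum_range_succ, ← sub_sub, ih, hy_def]
        simp only [smul_sub, smul_smul, ← pow_succ]
        abel
    -- coefficients of y k in span of s
    have hcoef : ∀ k, ∃ c : F → R, ∑ v ∈ s, c v • v = y k := by
      intro k
      have : y k ∈ Submodule.span R (s : Set F) := by rw [hs]; exact hyN k
      obtain ⟨c, -, hc⟩ := Submodule.mem_span_finset.mp this
      exact ⟨c, hc⟩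
    choose c hc using hcoef
    -- limits of partial coefficient sums
    have hScauchy : ∀ v : F, ∃ S : R, ∀ n, ∃ t,
        S - ∑ k ∈ Finset.range n, π ^ k * c k v = π ^ n * t := by
      intro v
      refine precR (fun n => ∑ k ∈ Finset.range n, π ^ k * c k v) fun m n hmn => ?_
      refine ⟨∑ k ∈ Finset.range (n - m), π ^ k * c (m + k) v, ?_⟩
      simpa only [smul_eq_mul] using
        sum_range_sub_sum_range_smul π (fun k => c k v) hmn
    choose S hS using hScauchy
    have hwN : (∑ v ∈ s, S v • v) ∈ N := by
      rw [← hs]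
      exact Submodule.sum_mem _ fun v hv =>
        Submodule.smul_mem _ _ (Submodule.subset_span hv)
    have hz0 : z 0 - ∑ v ∈ s, S v • v = 0 := by
      apply hausF
      intro n
      choose t ht using fun v => hS v n
      refine ⟨z n + ∑ v ∈ s, (-(t v)) • v, ?_⟩
      have e1 : ∑ k ∈ Finset.range n, π ^ k • y k
          = ∑ v ∈ s, (∑ k ∈ Finset.range n, π ^ k * c k v) • v := by
        simp only [← hc, Finset.smul_sum, smul_smul]
        rw [Finset.sum_comm]
        simp only [Finset.sum_smul]
      have e4 : ∑ v ∈ s, ((∑ k ∈ Finset.range n, π ^ k * c k v) • v - S v • v)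
          = π ^ n • ∑ v ∈ s, (-(t v)) • v := by
        rw [Finset.smul_sum]
        refine Finset.sum_congr rfl fun v hv => ?_
        rw [← sub_smul, show (∑ k ∈ Finset.range n, π ^ k * c k v) - S v = π ^ n * (-(t v)) by
          rw [← neg_sub, ht v, mul_neg], mul_smul]
      calc z 0 - ∑ v ∈ s, S v • v
          = (z 0 - ∑ k ∈ Finset.range n, π ^ k • y k)
            + (∑ k ∈ Finset.range n, π ^ k • y k - ∑ v ∈ s, S v • v) :=
            (sub_add_sub_cancel _ _ _).symm
        _ = π ^ n • z n + (∑ v ∈ s, (∑ k ∈ Finset.range n, π ^ k * c k v) • v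
            - ∑ v ∈ s, S v • v) := by rw [tele n, e1]
        _ = π ^ n • z n
            + ∑ v ∈ s, ((∑ k ∈ Finset.range n, π ^ k * c k v) • v - S v • v) := by
            rw [Finset.sum_sub_distrib]
        _ = π ^ n • z n + π ^ n • ∑ v ∈ s, (-(t v)) • v := by rw [e4]
        _ = π ^ n • (z n + ∑ v ∈ s, (-(t v)) • v) := by rw [smul_add]
    have hz0N : z 0 ∈ N := by
      rw [show z 0 = ∑ v ∈ s, S v • v from sub_eq_zero.mp hz0]
      exact hwN
    have hxhN : xh ∈ N := by
      have h0 := hw 0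
      rw [pow_zero, one_smul] at h0
      simpa using Submodule.add_mem _ h0 hz0N
    rw [← hxh]
    exact hxhN
  · -- Precomplete
    constructor
    intro f hf
    have hstep : ∀ n, ∃ d : M, f (n + 1) - f n = π ^ n • d := by
      intro n
      obtain ⟨d, hd⟩ := (smodeq_pow_iff π n (f n) (f (n + 1))).mp (hf (Nat.le_succ n))
      exact ⟨-d, by rw [← neg_sub (f n), hd, smul_neg]⟩
    choose d hd using hstep
    choose dh hdh using fun n => hg (d n)
    obtain ⟨x0, hx0⟩ := hg (f 0)
    set X : ℕ → F := fun n => x0 + ∑ k ∈ Finset.range n, π ^ k • dh k with hX_def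
    have hXsucc : ∀ n, X (n + 1) = X n + π ^ n • dh n := by
      intro n
      simp only [hX_def, Finset.sum_range_succ, add_assoc]
    have hgX : ∀ n, g (X n) = f n := by
      intro n
      induction n with
      | zero => simp [hX_def, hx0]
      | succ n ih =>
        rw [hXsucc n, map_add, map_smul, ih, hdh, ← hd n]
        abel
    have hXcauchy : ∀ m n, m ≤ n → ∃ z : F, X n - X m = π ^ m • z := by
      intro m n hmn
      refine ⟨∑ k ∈ Finset.range (n - m), π ^ k • dh (m + k), ?_⟩
      have : X n - X m = ∑ k ∈ Finset.range n, π ^ k • dh k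
          - ∑ k ∈ Finset.range m, π ^ k • dh k := by
        simp only [hX_def]
        abel
      rw [this, sum_range_sub_sum_range_smul π dh hmn]
    obtain ⟨L, hL⟩ := precF X hXcauchy
    refine ⟨g L, fun n => ?_⟩
    obtain ⟨z, hz⟩ := hL n
    refine (smodeq_pow_iff π n (f n) (g L)).mpr ⟨-(g z), ?_⟩
    rw [← hgX n, ← map_sub, ← neg_sub L (X n), hz]
    simp
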